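/- Let d ≥ 1, let μ be a probability measure on ℝ^d with finite fourth moment, μ ≠ δ₀, and let B = ∫ xxᵀ dμ(x). Then the second order separation parameter satisfies (s(μ)/‖B‖_F)² ≤ 4[ λ₂(T_μ)/λ₁(T_μ) + (1 − ‖B‖_F²/λ₁(T_μ)) ]. -/

import Mathlib

open MeasureTheory
open scoped ENNReal RealInnerProductSpace Classical

noncomputable section

/-- The outer product `x xᵀ` of a vector in Euclidean space, as a matrix. -/
def outer {d : ℕ} (x : EuclideanSpace ℝ (Fin d)) : Matrix (Fin d) (Fin d) ℝ :=
  Matrix.of fun i j => x i * x j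

/-- The trace inner product `⟨A, B⟩ = Tr (A B)` on symmetric matrices. -/
def minner {d : ℕ} (A B : Matrix (Fin d) (Fin d) ℝ) : ℝ :=
  Matrix.trace (A * B)

/-- The Frobenius norm of a matrix. -/
def frobNorm {d : ℕ} (M : Matrix (Fin d) (Fin d) ℝ) : ℝ :=
  Real.sqrt (∑ i, ∑ j, (M i j) ^ 2)

/-- Entrywise integral of a matrix-valued function. -/
def mIntegral {d : ℕ} (μ : Measure (EuclideanSpace ℝ (Fin d)))
    (F : EuclideanSpace ℝ (Fin d) → Matrix (Fin d) (Fin d) ℝ) :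
    Matrix (Fin d) (Fin d) ℝ :=
  Matrix.of fun i j => ∫ x, F x i j ∂μ

/-- The fourth moment operator `T_μ (A) = ∫ ⟨A, xxᵀ⟩ xxᵀ dμ(x)`. -/
def fourthMomentOp {d : ℕ} (μ : Measure (EuclideanSpace ℝ (Fin d)))
    (A : Matrix (Fin d) (Fin d) ℝ) : Matrix (Fin d) (Fin d) ℝ :=
  mIntegral μ (fun x => minner A (outer x) • outer x)

/-- The second moment matrix `B = ∫ xxᵀ dμ(x)`. -/
def secondMoment {d : ℕ} (μ : Measure (EuclideanSpace ℝ (Fin d))) :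
    Matrix (Fin d) (Fin d) ℝ :=
  mIntegral μ outer

/-- `lam : ℕ → ℝ` lists the eigenvalues (with multiplicity) of the fourth moment operator
`T_μ`, viewed as an operator on the `d(d+1)/2`-dimensional inner product space of symmetric
matrices, in descending order, padded by `0` beyond index `d(d+1)/2`. -/
def IsEigenSeq {d : ℕ} (μ : Measure (EuclideanSpace ℝ (Fin d))) (lam : ℕ → ℝ) : Prop :=
  Antitone lam ∧ (∀ i, d * (d + 1) / 2 ≤ i → lam i = 0) ∧
  ∃ b : Fin (d * (d + 1) / 2) → Matrix (Fin d) (Fin d) ℝ,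
    (∀ i, (b i).IsSymm) ∧
    (∀ i j, minner (b i) (b j) = if i = j then 1 else 0) ∧
    (∀ A : Matrix (Fin d) (Fin d) ℝ, A.IsSymm → A ∈ Submodule.span ℝ (Set.range b)) ∧
    (∀ i : Fin (d * (d + 1) / 2), fourthMomentOp μ (b i) = lam i • b i)

/-- The second order separation parameter `s(μ)`. -/
def sep {d : ℕ} (μ : Measure (EuclideanSpace ℝ (Fin d))) : ℝ :=
  (1 / 2) * sSup { r : ℝ | ∃ μ₁ μ₂ : Measure (EuclideanSpace ℝ (Fin d)),
    IsProbabilityMeasure μ₁ ∧ IsProbabilityMeasure μ₂ ∧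
    μ = (2 : ℝ≥0∞)⁻¹ • μ₁ + (2 : ℝ≥0∞)⁻¹ • μ₂ ∧
    r = frobNorm (secondMoment μ₁ - secondMoment μ₂) }

/-- The standard Gaussian measure `N(0, I)` on `ℝ^d`. -/
def stdGaussian (d : ℕ) : Measure (EuclideanSpace ℝ (Fin d)) :=
  (Measure.pi fun _ : Fin d => ProbabilityTheory.gaussianReal 0 1).map
    (MeasurableEquiv.toLp 2 (Fin d → ℝ))

/-- The centered Gaussian measure `N(0, B)` on `ℝ^d` with positive semidefinite
covariance matrix `B`, obtained as the pushforward of `N(0, I)` by `B^{1/2}`. -/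
def gaussianCov {d : ℕ} (B : Matrix (Fin d) (Fin d) ℝ) :
    Measure (EuclideanSpace ℝ (Fin d)) :=
  if hB : B.PosSemidef then (stdGaussian d).map (fun x => Matrix.toEuclideanLin (hB.1.eigenvectorUnitary.1 *
    Matrix.diagonal ((RCLike.ofReal : ℝ → ℝ) ∘ (√·) ∘ hB.1.eigenvalues) *
    (star hB.1.eigenvectorUnitary : Matrix (Fin d) (Fin d) ℝ)) x)
  else 0

/-- The positive semidefinite square root `B^{1/2}` of a positive semidefinite matrix. -/
def psdSqrt {d : ℕ} (B : Matrix (Fin d) (Fin d) ℝ) : Matrix (Fin d) (Fin d) ℝ :=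
  if hB : B.PosSemidef then hB.1.eigenvectorUnitary.1 *
    Matrix.diagonal ((RCLike.ofReal : ℝ → ℝ) ∘ (√·) ∘ hB.1.eigenvalues) *
    (star hB.1.eigenvectorUnitary : Matrix (Fin d) (Fin d) ℝ) else 0

namespace SepAux


variable {d : ℕ}

lemma minner_eq_sum (A B : Matrix (Fin d) (Fin d) ℝ) :
    minner A B = ∑ i, ∑ j, A i j * B j i := by
  simp [minner, Matrix.trace, Matrix.mul_apply, Matrix.diag]

lemma minner_comm (A B : Matrix (Fin d) (Fin d) ℝ) : minner A B = minner B A := by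
  rw [minner_eq_sum, minner_eq_sum, Finset.sum_comm]
  exact Finset.sum_congr rfl fun i _ => Finset.sum_congr rfl fun j _ => mul_comm _ _

lemma minner_add_left (A B C : Matrix (Fin d) (Fin d) ℝ) :
    minner (A + B) C = minner A C + minner B C := by
  simp [minner_eq_sum, Matrix.add_apply, add_mul, Finset.sum_add_distrib]

lemma minner_sub_left (A B C : Matrix (Fin d) (Fin d) ℝ) :
    minner (A - B) C = minner A C - minner B C := by
  simp [minner_eq_sum, Matrix.sub_apply, sub_mul, Finset.sum_sub_distrib]

lemma minner_smul_left (r : ℝ) (A C : Matrix (Fin d) (Fin d) ℝ) :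
    minner (r • A) C = r * minner A C := by
  simp [minner_eq_sum, Matrix.smul_apply, smul_eq_mul, Finset.mul_sum, mul_assoc]

lemma minner_add_right (A B C : Matrix (Fin d) (Fin d) ℝ) :
    minner A (B + C) = minner A B + minner A C := by
  rw [minner_comm, minner_add_left, minner_comm B A, minner_comm C A]

lemma minner_sub_right (A B C : Matrix (Fin d) (Fin d) ℝ) :
    minner A (B - C) = minner A B - minner A C := by
  rw [minner_comm, minner_sub_left, minner_comm B A, minner_comm C A]

lemma minner_smul_right (r : ℝ) (A C : Matrix (Fin d) (Fin d) ℝ) :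
    minner A (r • C) = r * minner A C := by
  rw [minner_comm, minner_smul_left, minner_comm C A]

lemma minner_sum_left' {ι : Type*} (s : Finset ι) (f : ι → Matrix (Fin d) (Fin d) ℝ)
    (C : Matrix (Fin d) (Fin d) ℝ) :
    minner (∑ i ∈ s, f i) C = ∑ i ∈ s, minner (f i) C := by
  classical
  induction s using Finset.induction_on with
  | empty => simp [minner_eq_sum]
  | @insert a s ha ih => rw [Finset.sum_insert ha, Finset.sum_insert ha, minner_add_left, ih]

lemma minner_sum_left {ι : Type*} [Fintype ι] (f : ι → Matrix (Fin d) (Fin d) ℝ)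
    (C : Matrix (Fin d) (Fin d) ℝ) :
    minner (∑ i, f i) C = ∑ i, minner (f i) C :=
  minner_sum_left' _ f C

lemma minner_self_nonneg {A : Matrix (Fin d) (Fin d) ℝ} (hA : A.IsSymm) :
    0 ≤ minner A A := by
  rw [minner_eq_sum]
  refine Finset.sum_nonneg fun i _ => Finset.sum_nonneg fun j _ => ?_
  rw [← hA.apply j i]
  exact mul_self_nonneg _

lemma minner_self_eq_sum_sq {A : Matrix (Fin d) (Fin d) ℝ} (hA : A.IsSymm) :
    minner A A = ∑ i, ∑ j, (A i j) ^ 2 := by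
  rw [minner_eq_sum]
  refine Finset.sum_congr rfl fun i _ => Finset.sum_congr rfl fun j _ => ?_
  rw [← hA.apply j i]; ring

lemma frobNorm_sq {M : Matrix (Fin d) (Fin d) ℝ} :
    frobNorm M ^ 2 = ∑ i, ∑ j, (M i j) ^ 2 := by
  rw [frobNorm, Real.sq_sqrt]
  exact Finset.sum_nonneg fun i _ => Finset.sum_nonneg fun j _ => sq_nonneg _

lemma frobNorm_sq_eq_minner {M : Matrix (Fin d) (Fin d) ℝ} (hM : M.IsSymm) :
    frobNorm M ^ 2 = minner M M := by
  rw [frobNorm_sq, minner_self_eq_sum_sq hM]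

lemma frobNorm_nonneg (M : Matrix (Fin d) (Fin d) ℝ) : 0 ≤ frobNorm M :=
  Real.sqrt_nonneg _

lemma minner_cauchy_schwarz {P Q : Matrix (Fin d) (Fin d) ℝ} (hP : P.IsSymm) (hQ : Q.IsSymm) :
    (minner P Q) ^ 2 ≤ minner P P * minner Q Q := by
  have h1 : minner P Q = ∑ p : Fin d × Fin d, P p.1 p.2 * Q p.2 p.1 := by
    rw [minner_eq_sum, Fintype.sum_prod_type]
  have h2 : minner P P = ∑ p : Fin d × Fin d, (P p.1 p.2) ^ 2 := by
    rw [minner_self_eq_sum_sq hP, Fintype.sum_prod_type]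
  have h3 : minner Q Q = ∑ p : Fin d × Fin d, (Q p.2 p.1) ^ 2 := by
    rw [minner_self_eq_sum_sq hQ, Fintype.sum_prod_type, Finset.sum_comm]
  rw [h1, h2, h3]
  exact Finset.sum_mul_sq_le_sq_mul_sq _ _ _

lemma isSymm_sub {A B : Matrix (Fin d) (Fin d) ℝ} (hA : A.IsSymm) (hB : B.IsSymm) :
    (A - B).IsSymm := by
  unfold Matrix.IsSymm at *
  rw [Matrix.transpose_sub, hA, hB]

lemma isSymm_smul {A : Matrix (Fin d) (Fin d) ℝ} (r : ℝ) (hA : A.IsSymm) :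
    (r • A).IsSymm := by
  unfold Matrix.IsSymm at *
  rw [Matrix.transpose_smul, hA]


variable {d : ℕ}


/-- quadratic form `x ↦ ⟨A, x xᵀ⟩`. -/
def gq (A : Matrix (Fin d) (Fin d) ℝ) (x : EuclideanSpace ℝ (Fin d)) : ℝ :=
  minner A (outer x)

lemma gq_eq (A : Matrix (Fin d) (Fin d) ℝ) (x : EuclideanSpace ℝ (Fin d)) :
    gq A x = ∑ i, ∑ j, A i j * (x j * x i) := by
  rw [gq, minner_eq_sum]; rfl

lemma abs_coord_le (x : EuclideanSpace ℝ (Fin d)) (i : Fin d) : |x i| ≤ ‖x‖ := by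
  rw [EuclideanSpace.norm_eq, ← Real.sqrt_sq_eq_abs]
  apply Real.sqrt_le_sqrt
  have := Finset.single_le_sum (f := fun j => ‖x j‖ ^ 2)
    (fun j _ => sq_nonneg _) (Finset.mem_univ i)
  simpa [Real.norm_eq_abs, sq_abs] using this

lemma continuous_coord (i : Fin d) : Continuous (fun x : EuclideanSpace ℝ (Fin d) => x i) :=
  by fun_prop

lemma continuous_gq (A : Matrix (Fin d) (Fin d) ℝ) : Continuous (gq A) := by
  have : gq A = fun x => ∑ i, ∑ j, A i j * (x j * x i) := funext fun x => gq_eq A x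
  rw [this]
  refine continuous_finset_sum _ fun i _ => continuous_finset_sum _ fun j _ => ?_
  exact continuous_const.mul ((continuous_coord j).mul (continuous_coord i))

lemma abs_mul_coord_le (x : EuclideanSpace ℝ (Fin d)) (i j : Fin d) :
    |x i * x j| ≤ ‖x‖ ^ 2 := by
  rw [abs_mul, sq]
  exact mul_le_mul (abs_coord_le x i) (abs_coord_le x j) (abs_nonneg _) (norm_nonneg _)

lemma abs_gq_le (A : Matrix (Fin d) (Fin d) ℝ) (x : EuclideanSpace ℝ (Fin d)) :
    |gq A x| ≤ (∑ i, ∑ j, |A i j|) * ‖x‖ ^ 2 := by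
  rw [gq_eq, Finset.sum_mul]
  refine (Finset.abs_sum_le_sum_abs _ _).trans (Finset.sum_le_sum fun i _ => ?_)
  rw [Finset.sum_mul]
  refine (Finset.abs_sum_le_sum_abs _ _).trans (Finset.sum_le_sum fun j _ => ?_)
  rw [abs_mul]
  exact mul_le_mul_of_nonneg_left (abs_mul_coord_le x j i) (abs_nonneg _)

variable {μ ν : Measure (EuclideanSpace ℝ (Fin d))}

lemma sq_le_one_add_pow4 (t : ℝ) : t ^ 2 ≤ 1 + t ^ 4 := by nlinarith [sq_nonneg (t ^ 2 - 1), sq_nonneg t]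

/-- master integrability lemma -/
lemma integrable_dom [IsFiniteMeasure μ] (h4 : Integrable (fun x => ‖x‖ ^ 4) μ)
    (hν : ν ≤ (2 : ℝ≥0∞) • μ) {f : EuclideanSpace ℝ (Fin d) → ℝ} (hf : Continuous f) (C : ℝ)
    (hb : ∀ x, |f x| ≤ C * (1 + ‖x‖ ^ 4)) : Integrable f ν := by
  have hg : Integrable (fun x => C * (1 + ‖x‖ ^ 4)) μ :=
    ((integrable_const 1).add h4).const_mul C
  have hg2 : Integrable (fun x => C * (1 + ‖x‖ ^ 4)) ν :=
    (hg.smul_measure (c := 2) (by norm_num)).mono_measure hν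
  refine hg2.mono' hf.aestronglyMeasurable (ae_of_all _ fun x => ?_)
  rw [Real.norm_eq_abs]; exact hb x

lemma integrable_coord_mul [IsFiniteMeasure μ] (h4 : Integrable (fun x => ‖x‖ ^ 4) μ)
    (hν : ν ≤ (2 : ℝ≥0∞) • μ) (i j : Fin d) : Integrable (fun x => x i * x j) ν := by
  refine integrable_dom h4 hν (((continuous_coord i).mul (continuous_coord j))) 1 fun x => ?_
  rw [one_mul]
  exact (abs_mul_coord_le x i j).trans (sq_le_one_add_pow4 _)

lemma integrable_gq [IsFiniteMeasure μ] (h4 : Integrable (fun x => ‖x‖ ^ 4) μ)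
    (hν : ν ≤ (2 : ℝ≥0∞) • μ) (A : Matrix (Fin d) (Fin d) ℝ) : Integrable (gq A) ν := by
  set C := ∑ i, ∑ j, |A i j| with hC
  have hC0 : 0 ≤ C := Finset.sum_nonneg fun i _ => Finset.sum_nonneg fun j _ => abs_nonneg _
  refine integrable_dom h4 hν (continuous_gq A) C fun x => ?_
  calc |gq A x| ≤ C * ‖x‖ ^ 2 := abs_gq_le A x
    _ ≤ C * (1 + ‖x‖ ^ 4) := by
        refine mul_le_mul_of_nonneg_left ?_ hC0
        exact sq_le_one_add_pow4 ‖x‖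

lemma norm_pow4_eq (x : EuclideanSpace ℝ (Fin d)) : (‖x‖ ^ 2) ^ 2 = ‖x‖ ^ 4 := by ring

lemma integrable_gq_mul_gq [IsFiniteMeasure μ] (h4 : Integrable (fun x => ‖x‖ ^ 4) μ)
    (hν : ν ≤ (2 : ℝ≥0∞) • μ) (A B : Matrix (Fin d) (Fin d) ℝ) :
    Integrable (fun x => gq A x * gq B x) ν := by
  set CA := ∑ i, ∑ j, |A i j| with hCA
  set CB := ∑ i, ∑ j, |B i j| with hCB
  have hCA0 : 0 ≤ CA := Finset.sum_nonneg fun i _ => Finset.sum_nonneg fun j _ => abs_nonneg _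
  have hCB0 : 0 ≤ CB := Finset.sum_nonneg fun i _ => Finset.sum_nonneg fun j _ => abs_nonneg _
  refine integrable_dom h4 hν ((continuous_gq A).mul (continuous_gq B)) (CA * CB) fun x => ?_
  have h1 : |gq A x * gq B x| ≤ (CA * ‖x‖ ^ 2) * (CB * ‖x‖ ^ 2) := by
    rw [abs_mul]
    exact mul_le_mul (abs_gq_le A x) (abs_gq_le B x) (abs_nonneg _)
      (mul_nonneg hCA0 (sq_nonneg _))
  refine h1.trans ?_
  have : (CA * ‖x‖ ^ 2) * (CB * ‖x‖ ^ 2) = CA * CB * ‖x‖ ^ 4 := by ring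
  rw [this]
  refine mul_le_mul_of_nonneg_left ?_ (mul_nonneg hCA0 hCB0)
  nlinarith [pow_nonneg (norm_nonneg x) 4]

lemma integrable_gq_mul_coord [IsFiniteMeasure μ] (h4 : Integrable (fun x => ‖x‖ ^ 4) μ)
    (hν : ν ≤ (2 : ℝ≥0∞) • μ) (A : Matrix (Fin d) (Fin d) ℝ) (i j : Fin d) :
    Integrable (fun x => gq A x * (x i * x j)) ν := by
  set CA := ∑ i, ∑ j, |A i j| with hCA
  have hCA0 : 0 ≤ CA := Finset.sum_nonneg fun i _ => Finset.sum_nonneg fun j _ => abs_nonneg _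
  refine integrable_dom h4 hν ((continuous_gq A).mul
    ((continuous_coord i).mul (continuous_coord j))) CA fun x => ?_
  have h1 : |gq A x * (x i * x j)| ≤ (CA * ‖x‖ ^ 2) * ‖x‖ ^ 2 := by
    rw [abs_mul]
    exact mul_le_mul (abs_gq_le A x) (abs_mul_coord_le x i j) (abs_nonneg _)
      (mul_nonneg hCA0 (sq_nonneg _))
  refine h1.trans ?_
  have : (CA * ‖x‖ ^ 2) * ‖x‖ ^ 2 = CA * ‖x‖ ^ 4 := by ring
  rw [this]
  refine mul_le_mul_of_nonneg_left ?_ hCA0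
  nlinarith [pow_nonneg (norm_nonneg x) 4]

lemma integrable_gq_sq [IsFiniteMeasure μ] (h4 : Integrable (fun x => ‖x‖ ^ 4) μ)
    (hν : ν ≤ (2 : ℝ≥0∞) • μ) (A : Matrix (Fin d) (Fin d) ℝ) :
    Integrable (fun x => (gq A x) ^ 2) ν := by
  have := integrable_gq_mul_gq h4 hν A A
  simpa [sq] using this

lemma self_le_two_smul (μ : Measure (EuclideanSpace ℝ (Fin d))) : μ ≤ (2 : ℝ≥0∞) • μ := by
  rw [two_smul]
  exact Measure.le_add_right le_rfl


section Moments

variable {d : ℕ} {μ ν μ₁ μ₂ : Measure (EuclideanSpace ℝ (Fin d))}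

lemma secondMoment_apply (ν : Measure (EuclideanSpace ℝ (Fin d))) (i j : Fin d) :
    secondMoment ν i j = ∫ x, x i * x j ∂ν := rfl

lemma secondMoment_isSymm (ν : Measure (EuclideanSpace ℝ (Fin d))) :
    (secondMoment ν).IsSymm := by
  unfold Matrix.IsSymm
  ext i j
  rw [Matrix.transpose_apply, secondMoment_apply, secondMoment_apply]
  simp_rw [mul_comm]

lemma minner_secondMoment [IsFiniteMeasure μ] (h4 : Integrable (fun x => ‖x‖ ^ 4) μ)
    (hν : ν ≤ (2 : ℝ≥0∞) • μ) (A : Matrix (Fin d) (Fin d) ℝ) :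
    minner A (secondMoment ν) = ∫ x, gq A x ∂ν := by
  have hint : ∀ i j : Fin d, Integrable (fun x => A i j * (x j * x i)) ν :=
    fun i j => (integrable_coord_mul h4 hν j i).const_mul _
  rw [minner_eq_sum]
  have : ∀ x : EuclideanSpace ℝ (Fin d), gq A x = ∑ i, ∑ j, A i j * (x j * x i) := gq_eq A
  simp_rw [this]
  rw [integral_finset_sum _ (fun i _ => integrable_finset_sum _ (fun j _ => hint i j))]
  refine Finset.sum_congr rfl fun i _ => ?_
  rw [integral_finset_sum _ (fun j _ => hint i j)]
  refine Finset.sum_congr rfl fun j _ => ?_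
  rw [integral_const_mul, secondMoment_apply]

/-- entrywise: `minner` commutes with `mIntegral`. -/
lemma minner_mIntegral (ν : Measure (EuclideanSpace ℝ (Fin d)))
    (F : EuclideanSpace ℝ (Fin d) → Matrix (Fin d) (Fin d) ℝ)
    (hF : ∀ i j : Fin d, Integrable (fun x => F x i j) ν) (P : Matrix (Fin d) (Fin d) ℝ) :
    minner P (mIntegral ν F) = ∫ x, minner P (F x) ∂ν := by
  rw [minner_eq_sum]
  simp_rw [minner_eq_sum]
  rw [integral_finset_sum _ (fun i _ => integrable_finset_sum _
    (fun j _ => (hF j i).const_mul (P i j)))]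
  refine Finset.sum_congr rfl fun i _ => ?_
  rw [integral_finset_sum _ (fun j _ => (hF j i).const_mul (P i j))]
  refine Finset.sum_congr rfl fun j _ => ?_
  rw [integral_const_mul]
  rfl

/-- ⟨P, T_μ Q⟩ = ∫ (gq P)(gq Q). -/
lemma minner_fourthMomentOp [IsFiniteMeasure μ] (h4 : Integrable (fun x => ‖x‖ ^ 4) μ)
    (P Q : Matrix (Fin d) (Fin d) ℝ) :
    minner P (fourthMomentOp μ Q) = ∫ x, gq P x * gq Q x ∂μ := by
  have hμμ : μ ≤ (2 : ℝ≥0∞) • μ := self_le_two_smul μ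
  rw [fourthMomentOp, minner_mIntegral μ _
    (fun i j => by simpa [outer, gq, smul_eq_mul, Matrix.smul_apply] using
      integrable_gq_mul_coord h4 hμμ Q i j)]
  refine integral_congr_ae (ae_of_all _ fun x => ?_)
  show minner P (gq Q x • outer x) = gq P x * gq Q x
  simp only [gq]
  rw [minner_smul_right, mul_comm]

/-- Jensen: for probability measure, (∫ f)² ≤ ∫ f². -/
lemma sq_integral_le (ν : Measure (EuclideanSpace ℝ (Fin d))) [IsProbabilityMeasure ν]
    {f : EuclideanSpace ℝ (Fin d) → ℝ} (hf : Integrable f ν)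
    (hf2 : Integrable (fun x => (f x) ^ 2) ν) :
    (∫ x, f x ∂ν) ^ 2 ≤ ∫ x, (f x) ^ 2 ∂ν := by
  set c := ∫ x, f x ∂ν with hc
  have h0 : 0 ≤ ∫ x, (f x - c) ^ 2 ∂ν := integral_nonneg fun x => sq_nonneg _
  have hexp : ∀ x : EuclideanSpace ℝ (Fin d), (f x - c) ^ 2 = (f x) ^ 2 - 2 * c * f x + c ^ 2 :=
    fun x => by ring
  have hint1 : Integrable (fun x => (f x) ^ 2 - 2 * c * f x) ν := hf2.sub ((hf.const_mul _))
  have : ∫ x, (f x - c) ^ 2 ∂ν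
      = (∫ x, ((f x) ^ 2 - 2 * c * f x) ∂ν) + ∫ x, (c : ℝ) ^ 2 ∂ν := by
    simp_rw [hexp]
    exact integral_add hint1 (integrable_const _)
  rw [integral_sub hf2 (hf.const_mul _), integral_const_mul, integral_const] at this
  simp only [probReal_univ, measure_univ, ENNReal.toReal_one, one_smul, smul_eq_mul] at this
  rw [this] at h0
  nlinarith [h0]

end Moments

section Decomp

variable {d : ℕ} {μ μ₁ μ₂ : Measure (EuclideanSpace ℝ (Fin d))}

lemma two_smul_of_decomp (hdec : μ = (2 : ℝ≥0∞)⁻¹ • μ₁ + (2 : ℝ≥0∞)⁻¹ • μ₂) :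
    (2 : ℝ≥0∞) • μ = μ₁ + μ₂ := by
  rw [hdec, smul_add, smul_smul, smul_smul,
    ENNReal.mul_inv_cancel (by norm_num) (by norm_num), one_smul, one_smul]

lemma le_two_smul_left (hdec : μ = (2 : ℝ≥0∞)⁻¹ • μ₁ + (2 : ℝ≥0∞)⁻¹ • μ₂) :
    μ₁ ≤ (2 : ℝ≥0∞) • μ := by
  rw [two_smul_of_decomp hdec]
  exact Measure.le_add_right le_rfl

lemma le_two_smul_right (hdec : μ = (2 : ℝ≥0∞)⁻¹ • μ₁ + (2 : ℝ≥0∞)⁻¹ • μ₂) :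
    μ₂ ≤ (2 : ℝ≥0∞) • μ := by
  rw [two_smul_of_decomp hdec]
  exact Measure.le_add_left le_rfl

lemma integral_decomp (hdec : μ = (2 : ℝ≥0∞)⁻¹ • μ₁ + (2 : ℝ≥0∞)⁻¹ • μ₂)
    {f : EuclideanSpace ℝ (Fin d) → ℝ} (h1 : Integrable f μ₁) (h2 : Integrable f μ₂) :
    ∫ x, f x ∂μ = (1 / 2) * ∫ x, f x ∂μ₁ + (1 / 2) * ∫ x, f x ∂μ₂ := by
  rw [hdec, integral_add_measure (h1.smul_measure (by norm_num)) (h2.smul_measure (by norm_num)),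
    integral_smul_measure, integral_smul_measure]
  norm_num

end Decomp

section Spectral

variable {d : ℕ} {μ : Measure (EuclideanSpace ℝ (Fin d))}

lemma N_pos (hd : 1 ≤ d) : 0 < d * (d + 1) / 2 := by
  have h2 : 2 ≤ d * (d + 1) := by
    calc 2 = 1 * 2 := by norm_num
    _ ≤ d * (d + 1) := Nat.mul_le_mul hd (by omega)
  omega

lemma lam1_nonneg (hd : 1 ≤ d) (lam : ℕ → ℝ) (hlam : IsEigenSeq μ lam) : 0 ≤ lam 1 := by
  have hN := N_pos hd
  have h0 : lam (d * (d + 1) / 2) = 0 := hlam.2.1 _ le_rfl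
  have := hlam.1 (show 1 ≤ d * (d + 1) / 2 by omega)
  rw [h0] at this
  exact this

lemma lam1_le_lam0 (lam : ℕ → ℝ) (hlam : IsEigenSeq μ lam) : lam 1 ≤ lam 0 :=
  hlam.1 (Nat.zero_le 1)

lemma exists_b0 [IsProbabilityMeasure μ] (h4 : Integrable (fun x => ‖x‖ ^ 4) μ)
    (hd : 1 ≤ d) (lam : ℕ → ℝ) (hlam : IsEigenSeq μ lam) :
    ∃ b0 : Matrix (Fin d) (Fin d) ℝ, b0.IsSymm ∧ minner b0 b0 = 1 ∧
      ∀ A : Matrix (Fin d) (Fin d) ℝ, A.IsSymm →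
        ∫ x, (gq A x) ^ 2 ∂μ ≤ lam 1 * minner A A + (lam 0 - lam 1) * (minner A b0) ^ 2 := by
  have hμμ : μ ≤ (2 : ℝ≥0∞) • μ := self_le_two_smul μ
  have hN : 0 < d * (d + 1) / 2 := N_pos hd
  obtain ⟨hanti, hzero, b, hsym, horth, hspan, heig⟩ := hlam
  set i0 : Fin (d * (d + 1) / 2) := ⟨0, hN⟩ with hi0
  have horm : minner (b i0) (b i0) = 1 := by simpa using horth i0 i0
  refine ⟨b i0, hsym i0, horm, fun A hA => ?_⟩
  obtain ⟨c, hc⟩ := (Submodule.mem_span_range_iff_exists_fun ℝ).mp (hspan A hA)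
  -- coefficients
  have hAb : ∀ j, minner A (b j) = c j := by
    intro j
    rw [← hc, minner_sum_left]
    simp_rw [minner_smul_left]
    simp [horth]
  have hAA : minner A A = ∑ i, (c i) ^ 2 := by
    conv_lhs => rw [← hc, minner_sum_left]
    refine Finset.sum_congr rfl fun i _ => ?_
    rw [minner_smul_left, minner_comm, hc, hAb i]
    ring
  -- pointwise expansion of the quadratic form
  have hgq : ∀ x, gq A x = ∑ i, c i * gq (b i) x := by
    intro x
    simp only [gq]
    rw [← hc, minner_sum_left]
    exact Finset.sum_congr rfl fun i _ => minner_smul_left _ _ _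
  -- integrals of products of eigen quadratic forms
  have hij : ∀ i j : Fin (d * (d + 1) / 2), ∫ x, gq (b i) x * gq (b j) x ∂μ
      = lam ↑j * (if i = j then 1 else 0) := by
    intro i j
    rw [← minner_fourthMomentOp h4, heig j, minner_smul_right, horth]
  have hVc : ∫ x, (gq A x) ^ 2 ∂μ = ∑ i, (c i) ^ 2 * lam ↑i := by
    have hpt : ∀ x, (gq A x) ^ 2 = ∑ i, ∑ j, (c i * c j) * (gq (b i) x * gq (b j) x) := by
      intro x
      rw [sq, hgq x, Finset.sum_mul_sum]
      exact Finset.sum_congr rfl fun i _ => Finset.sum_congr rfl fun j _ => by ring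
    simp_rw [hpt]
    rw [integral_finset_sum _ (fun i _ => integrable_finset_sum _ (fun j _ =>
      ((integrable_gq_mul_gq h4 hμμ (b i) (b j)).const_mul _)))]
    have : ∀ i : Fin (d * (d + 1) / 2), ∫ x, (∑ j, (c i * c j) * (gq (b i) x * gq (b j) x)) ∂μ
        = (c i) ^ 2 * lam ↑i := by
      intro i
      rw [integral_finset_sum _ (fun j _ =>
        ((integrable_gq_mul_gq h4 hμμ (b i) (b j)).const_mul _))]
      have : ∀ j : Fin (d * (d + 1) / 2), ∫ x, (c i * c j) * (gq (b i) x * gq (b j) x) ∂μ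
          = (c i * c j) * (lam ↑j * (if i = j then 1 else 0)) := by
        intro j
        rw [integral_const_mul, hij i j]
      simp_rw [this]
      rw [Finset.sum_eq_single i]
      · rw [if_pos rfl]; ring
      · intro j _ hj
        rw [if_neg (fun h => hj h.symm)]
        ring
      · intro h
        exact absurd (Finset.mem_univ i) h
    simp_rw [this]
  -- the spectral bound
  rw [hVc, hAA, hAb i0]
  have hsplit1 : ∑ i, (c i) ^ 2 * lam ↑i
      = (∑ i ∈ Finset.univ.erase i0, (c i) ^ 2 * lam ↑i) + (c i0) ^ 2 * lam ↑i0 :=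
    (Finset.sum_erase_add _ _ (Finset.mem_univ i0)).symm
  have hsplit2 : ∑ i, (c i) ^ 2
      = (∑ i ∈ Finset.univ.erase i0, (c i) ^ 2) + (c i0) ^ 2 :=
    (Finset.sum_erase_add _ _ (Finset.mem_univ i0)).symm
  have hkey : ∑ i ∈ Finset.univ.erase i0, (c i) ^ 2 * lam ↑i
      ≤ ∑ i ∈ Finset.univ.erase i0, (c i) ^ 2 * lam 1 := by
    refine Finset.sum_le_sum fun i hi => ?_
    have hne : i ≠ i0 := Finset.ne_of_mem_erase hi
    have hval : 1 ≤ (i : ℕ) := by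
      rcases Nat.eq_zero_or_pos (i : ℕ) with h | h
      · exact absurd (Fin.ext h) hne
      · omega
    exact mul_le_mul_of_nonneg_left (hanti hval) (sq_nonneg _)
  have hlam00 : lam ↑i0 = lam 0 := rfl
  rw [hsplit1, hsplit2, hlam00]
  rw [← Finset.sum_mul] at hkey
  nlinarith [hkey]

end Spectral


section Claims

variable {d : ℕ} {μ μ₁ μ₂ : Measure (EuclideanSpace ℝ (Fin d))}

lemma gq_secondMoment_nonneg [IsFiniteMeasure μ] (h4 : Integrable (fun x => ‖x‖ ^ 4) μ)
    (h2 : μ₂ ≤ (2 : ℝ≥0∞) • μ) (x : EuclideanSpace ℝ (Fin d)) :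
    0 ≤ gq (secondMoment μ₂) x := by
  rw [gq_eq]
  have hrw : ∀ i j : Fin d, secondMoment μ₂ i j * (x j * x i)
      = ∫ y, (y i * y j) * (x j * x i) ∂μ₂ := by
    intro i j
    rw [secondMoment_apply, ← integral_mul_const]
  simp_rw [hrw]
  have hswap : ∀ i : Fin d, ∑ j, ∫ y, (y i * y j) * (x j * x i) ∂μ₂
      = ∫ y, ∑ j, (y i * y j) * (x j * x i) ∂μ₂ := fun i =>
    (integral_finset_sum _ (fun j _ => (integrable_coord_mul h4 h2 i j).mul_const _)).symm
  simp_rw [hswap]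
  rw [← integral_finset_sum _ (fun i _ => integrable_finset_sum _
    (fun j _ => (integrable_coord_mul h4 h2 i j).mul_const _))]
  refine integral_nonneg fun y => ?_
  have : ∑ i, ∑ j, (y i * y j) * (x j * x i) = (∑ i, x i * y i) ^ 2 := by
    rw [sq, Finset.sum_mul_sum]
    exact Finset.sum_congr rfl fun i _ => Finset.sum_congr rfl fun j _ => by ring
  rw [this]
  exact sq_nonneg _

lemma minner_secondMoments_nonneg [IsFiniteMeasure μ] (h4 : Integrable (fun x => ‖x‖ ^ 4) μ)
    (h1 : μ₁ ≤ (2 : ℝ≥0∞) • μ) (h2 : μ₂ ≤ (2 : ℝ≥0∞) • μ) :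
    0 ≤ minner (secondMoment μ₂) (secondMoment μ₁) := by
  rw [minner_secondMoment h4 h1]
  exact integral_nonneg fun x => gq_secondMoment_nonneg h4 h2 x

lemma minner_decomp [IsProbabilityMeasure μ] (h4 : Integrable (fun x => ‖x‖ ^ 4) μ)
    (hdec : μ = (2 : ℝ≥0∞)⁻¹ • μ₁ + (2 : ℝ≥0∞)⁻¹ • μ₂) (A : Matrix (Fin d) (Fin d) ℝ) :
    minner A (secondMoment μ) =
      (1 / 2) * minner A (secondMoment μ₁) + (1 / 2) * minner A (secondMoment μ₂) := by
  have hle1 := le_two_smul_left hdec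
  have hle2 := le_two_smul_right hdec
  rw [minner_secondMoment h4 (self_le_two_smul μ), minner_secondMoment h4 hle1,
    minner_secondMoment h4 hle2]
  exact integral_decomp hdec (integrable_gq h4 hle1 A) (integrable_gq h4 hle2 A)

/-- Claim A : ‖B₁ - B₂‖² ≤ 4⟨B,B⟩. -/
lemma claimA [IsProbabilityMeasure μ] (h4 : Integrable (fun x => ‖x‖ ^ 4) μ)
    (hdec : μ = (2 : ℝ≥0∞)⁻¹ • μ₁ + (2 : ℝ≥0∞)⁻¹ • μ₂) :
    minner (secondMoment μ₁ - secondMoment μ₂) (secondMoment μ₁ - secondMoment μ₂)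
      ≤ 4 * minner (secondMoment μ) (secondMoment μ) := by
  have hle1 := le_two_smul_left hdec
  have hle2 := le_two_smul_right hdec
  set B1 := secondMoment μ₁
  set B2 := secondMoment μ₂
  have hcross : 0 ≤ minner B2 B1 := minner_secondMoments_nonneg h4 hle1 hle2
  have hM : minner (B1 - B2) (B1 - B2)
      = minner B1 B1 - 2 * minner B2 B1 + minner B2 B2 := by
    rw [minner_sub_left, minner_sub_right, minner_sub_right, minner_comm B1 B2]
    ring
  have h0 := minner_decomp h4 hdec (secondMoment μ)
  have h1 := minner_decomp h4 hdec B1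
  have h2 := minner_decomp h4 hdec B2
  have hc1 : minner (secondMoment μ) B1 = minner B1 (secondMoment μ) := minner_comm _ _
  have hc2 : minner (secondMoment μ) B2 = minner B2 (secondMoment μ) := minner_comm _ _
  have hc3 : minner B1 B2 = minner B2 B1 := minner_comm _ _
  rw [hM]
  linarith [h0, h1, h2, hc1, hc2, hc3, hcross]

/-- variance lower bound -/
lemma varLB [IsProbabilityMeasure μ] [IsProbabilityMeasure μ₁] [IsProbabilityMeasure μ₂]
    (h4 : Integrable (fun x => ‖x‖ ^ 4) μ)
    (hdec : μ = (2 : ℝ≥0∞)⁻¹ • μ₁ + (2 : ℝ≥0∞)⁻¹ • μ₂) (A : Matrix (Fin d) (Fin d) ℝ) :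
    (minner A (secondMoment μ)) ^ 2
      + (minner A (secondMoment μ₁ - secondMoment μ₂)) ^ 2 / 4
      ≤ ∫ x, (gq A x) ^ 2 ∂μ := by
  have hle1 := le_two_smul_left hdec
  have hle2 := le_two_smul_right hdec
  set u := minner A (secondMoment μ₁) with hu
  set v := minner A (secondMoment μ₂) with hv
  have hJ1 : u ^ 2 ≤ ∫ x, (gq A x) ^ 2 ∂μ₁ := by
    rw [hu, minner_secondMoment h4 hle1]
    exact sq_integral_le μ₁ (integrable_gq h4 hle1 A) (integrable_gq_sq h4 hle1 A)
  have hJ2 : v ^ 2 ≤ ∫ x, (gq A x) ^ 2 ∂μ₂ := by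
    rw [hv, minner_secondMoment h4 hle2]
    exact sq_integral_le μ₂ (integrable_gq h4 hle2 A) (integrable_gq_sq h4 hle2 A)
  have hsplit : ∫ x, (gq A x) ^ 2 ∂μ
      = (1/2) * ∫ x, (gq A x) ^ 2 ∂μ₁ + (1/2) * ∫ x, (gq A x) ^ 2 ∂μ₂ :=
    integral_decomp hdec (integrable_gq_sq h4 hle1 A) (integrable_gq_sq h4 hle2 A)
  have hB : minner A (secondMoment μ) = (1/2) * u + (1/2) * v := minner_decomp h4 hdec A
  have hMv : minner A (secondMoment μ₁ - secondMoment μ₂) = u - v := by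
    rw [minner_sub_right]
  rw [hB, hMv, hsplit]
  nlinarith [hJ1, hJ2]

/-- pure scalar endgame for Claim B -/
lemma scalar_final (lam0 lam1 βv mM e X a2 : ℝ)
    (hl10 : 0 ≤ lam1) (hl01 : lam1 ≤ lam0)
    (hKB : βv ^ 2 + e ^ 2 / 4 ≤ lam1 * βv + (lam0 - lam1) * X ^ 2)
    (hX2 : X ^ 2 ≤ βv) (hβpos : 0 < βv)
    (ha2 : 4 * βv * a2 = βv * mM - e ^ 2) (ha20 : 0 ≤ a2)
    (hstep : a2 ^ 2 ≤ lam1 * a2 + (lam0 - lam1) * (a2 * (1 - X ^ 2 / βv))) :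
    mM ≤ 4 * (lam0 + lam1 - βv) := by
  rcases eq_or_lt_of_le ha20 with h0 | hpos
  · have hmm : βv * mM = e ^ 2 := by rw [← h0] at ha2; linarith
    have key : βv * mM ≤ βv * (4 * (lam0 + lam1 - βv)) := by
      nlinarith [hmm, hKB, mul_nonneg (sub_nonneg.mpr hl01) (sub_nonneg.mpr hX2),
        mul_nonneg hl10 hβpos.le]
    exact le_of_mul_le_mul_left key hβpos
  · have hdiv : a2 * βv ≤ lam1 * βv + (lam0 - lam1) * (βv - X ^ 2) := by
      have h1 : a2 * (a2 * βv) ≤ a2 * (lam1 * βv + (lam0 - lam1) * (βv - X ^ 2)) := by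
        have h2 : a2 ^ 2 * βv
            ≤ (lam1 * a2 + (lam0 - lam1) * (a2 * (1 - X ^ 2 / βv))) * βv :=
          mul_le_mul_of_nonneg_right hstep hβpos.le
        calc a2 * (a2 * βv) = a2 ^ 2 * βv := by ring
          _ ≤ (lam1 * a2 + (lam0 - lam1) * (a2 * (1 - X ^ 2 / βv))) * βv := h2
          _ = a2 * (lam1 * βv + (lam0 - lam1) * (βv - X ^ 2)) := by field_simp
      exact le_of_mul_le_mul_left h1 hpos
    have key : βv * mM ≤ βv * (4 * (lam0 + lam1 - βv)) := by nlinarith [hdiv, hKB, ha2]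
    exact le_of_mul_le_mul_left key hβpos

/-- Claim B : ‖B₁ - B₂‖² ≤ 4(λ₀ + λ₁ - ⟨B,B⟩). -/
lemma claimB [IsProbabilityMeasure μ] [IsProbabilityMeasure μ₁] [IsProbabilityMeasure μ₂]
    (hd : 1 ≤ d) (h4 : Integrable (fun x => ‖x‖ ^ 4) μ)
    (lam : ℕ → ℝ) (hlam : IsEigenSeq μ lam)
    (hdec : μ = (2 : ℝ≥0∞)⁻¹ • μ₁ + (2 : ℝ≥0∞)⁻¹ • μ₂) :
    minner (secondMoment μ₁ - secondMoment μ₂) (secondMoment μ₁ - secondMoment μ₂)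
      ≤ 4 * (lam 0 + lam 1 - minner (secondMoment μ) (secondMoment μ)) := by
  have hl10 : 0 ≤ lam 1 := lam1_nonneg hd lam hlam
  have hl01 : lam 1 ≤ lam 0 := lam1_le_lam0 lam hlam
  obtain ⟨b0, hb0sym, hb0norm, hbound⟩ := exists_b0 h4 hd lam hlam
  set B := secondMoment μ with hBdef
  set M := secondMoment μ₁ - secondMoment μ₂ with hMdef
  have hBsym : B.IsSymm := secondMoment_isSymm μ
  have hMsym : M.IsSymm := isSymm_sub (secondMoment_isSymm μ₁) (secondMoment_isSymm μ₂)
  have hKEY : ∀ A : Matrix (Fin d) (Fin d) ℝ, A.IsSymm →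
      (minner A B) ^ 2 + (minner A M) ^ 2 / 4
        ≤ lam 1 * minner A A + (lam 0 - lam 1) * (minner A b0) ^ 2 :=
    fun A hA => (varLB h4 hdec A).trans (hbound A hA)
  have hβ0 : 0 ≤ minner B B := minner_self_nonneg hBsym
  have hmM0 : 0 ≤ minner M M := minner_self_nonneg hMsym
  have hKB : (minner B B) ^ 2 + (minner M B) ^ 2 / 4
      ≤ lam 1 * minner B B + (lam 0 - lam 1) * (minner B b0) ^ 2 := by
    have h := hKEY B hBsym
    rwa [minner_comm B M] at h
  have hX2 : (minner B b0) ^ 2 ≤ minner B B := by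
    have h := minner_cauchy_schwarz hBsym hb0sym
    rwa [hb0norm, mul_one] at h
  rcases eq_or_lt_of_le hβ0 with hβeq | hβpos
  · -- β = 0 : use claim A
    have hA := claimA h4 hdec
    rw [← hBdef, ← hMdef] at hA
    rw [← hβeq] at hA
    linarith
  · -- β > 0
    have hβne : minner B B ≠ 0 := ne_of_gt hβpos
    set A0 : Matrix (Fin d) (Fin d) ℝ
      := (2⁻¹ : ℝ) • M - (minner M B / (2 * minner B B)) • B with hA0def
    have hA0sym : A0.IsSymm := isSymm_sub (isSymm_smul _ hMsym) (isSymm_smul _ hBsym)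
    have hA0B : minner A0 B = 0 := by
      rw [hA0def, minner_sub_left, minner_smul_left, minner_smul_left]
      field_simp
      ring
    have hA0left : ∀ C : Matrix (Fin d) (Fin d) ℝ, minner A0 C
        = 2⁻¹ * minner M C - (minner M B / (2 * minner B B)) * minner B C := by
      intro C
      rw [hA0def, minner_sub_left, minner_smul_left, minner_smul_left]
    have hA0M : minner A0 M = 2 * minner A0 A0 := by
      have h1 : minner A0 A0 = 2⁻¹ * minner A0 M
          - (minner M B / (2 * minner B B)) * minner A0 B := by
        rw [hA0def]
        rw [minner_sub_right, minner_smul_right, minner_smul_right, ← hA0def]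
      rw [h1, hA0B]
      ring
    have ha2 : 4 * minner B B * minner A0 A0
        = minner B B * minner M M - (minner M B) ^ 2 := by
      have h1 : minner A0 A0 = 2⁻¹ * minner A0 M := by
        have h2 : minner A0 A0 = 2⁻¹ * minner A0 M
            - (minner M B / (2 * minner B B)) * minner A0 B := by
          rw [hA0def]
          rw [minner_sub_right, minner_smul_right, minner_smul_right, ← hA0def]
        rw [h2, hA0B]; ring
      have h3 : minner A0 M = 2⁻¹ * minner M M
          - (minner M B / (2 * minner B B)) * minner B M := hA0left M
      rw [h1, h3, minner_comm B M]
      field_simp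
      ring
    -- the orthogonalized direction q
    set q : Matrix (Fin d) (Fin d) ℝ
      := b0 - (minner B b0 / minner B B) • B with hqdef
    have hqsym : q.IsSymm := isSymm_sub hb0sym (isSymm_smul _ hBsym)
    have hqq : minner q q = 1 - (minner B b0) ^ 2 / minner B B := by
      have h1 : ∀ C : Matrix (Fin d) (Fin d) ℝ, minner q C
          = minner b0 C - (minner B b0 / minner B B) * minner B C := by
        intro C; rw [hqdef, minner_sub_left, minner_smul_left]
      have h2 : minner q q = minner q b0 - (minner B b0 / minner B B) * minner q B := by
        rw [hqdef]
        rw [minner_sub_right, minner_smul_right, ← hqdef]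
      rw [h2, h1 b0, h1 B, hb0norm, minner_comm b0 B]
      field_simp
      ring
    have hA0q : minner A0 q = minner A0 b0 := by
      rw [hqdef, minner_sub_right, minner_smul_right, hA0B]
      ring
    have hCSq : (minner A0 b0) ^ 2
        ≤ minner A0 A0 * (1 - (minner B b0) ^ 2 / minner B B) := by
      have h := minner_cauchy_schwarz hA0sym hqsym
      rwa [hA0q, hqq] at h
    have hKA0 : (minner A0 A0) ^ 2
        ≤ lam 1 * minner A0 A0 + (lam 0 - lam 1) * (minner A0 b0) ^ 2 := by
      have h := hKEY A0 hA0sym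
      rw [hA0B, hA0M] at h
      calc (minner A0 A0) ^ 2 = (0 : ℝ) ^ 2 + (2 * minner A0 A0) ^ 2 / 4 := by ring
        _ ≤ _ := h
    have ha20 : 0 ≤ minner A0 A0 := minner_self_nonneg hA0sym
    -- combine
    have hstep : (minner A0 A0) ^ 2
        ≤ lam 1 * minner A0 A0
          + (lam 0 - lam 1) * (minner A0 A0 * (1 - (minner B b0) ^ 2 / minner B B)) :=
      hKA0.trans (add_le_add_right
        (mul_le_mul_of_nonneg_left hCSq (sub_nonneg.mpr hl01)) _)
    exact scalar_final (lam 0) (lam 1) (minner B B) (minner M M) (minner M B)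
      (minner B b0) (minner A0 A0) hl10 hl01 hKB hX2 hβpos ha2 ha20 hstep

end Claims


section Final

variable {d : ℕ} {μ : Measure (EuclideanSpace ℝ (Fin d))}

lemma beta_le_lam0 [IsProbabilityMeasure μ] (h4 : Integrable (fun x => ‖x‖ ^ 4) μ)
    (hd : 1 ≤ d) (lam : ℕ → ℝ) (hlam : IsEigenSeq μ lam) :
    minner (secondMoment μ) (secondMoment μ) ≤ lam 0 := by
  have hl10 : 0 ≤ lam 1 := lam1_nonneg hd lam hlam
  have hl01 : lam 1 ≤ lam 0 := lam1_le_lam0 lam hlam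
  obtain ⟨b0, hb0sym, hb0norm, hbound⟩ := exists_b0 h4 hd lam hlam
  have hBsym : (secondMoment μ).IsSymm := secondMoment_isSymm μ
  have hβ0 : 0 ≤ minner (secondMoment μ) (secondMoment μ) := minner_self_nonneg hBsym
  have hJ : (minner (secondMoment μ) (secondMoment μ)) ^ 2
      ≤ ∫ x, (gq (secondMoment μ) x) ^ 2 ∂μ := by
    have h1 : minner (secondMoment μ) (secondMoment μ) = ∫ x, gq (secondMoment μ) x ∂μ :=
      minner_secondMoment h4 (self_le_two_smul μ) _
    rw [h1]
    exact sq_integral_le μ (integrable_gq h4 (self_le_two_smul μ) _)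
      (integrable_gq_sq h4 (self_le_two_smul μ) _)
  have hb := hbound (secondMoment μ) hBsym
  have hX2 : (minner (secondMoment μ) b0) ^ 2 ≤ minner (secondMoment μ) (secondMoment μ) := by
    have h := minner_cauchy_schwarz hBsym hb0sym
    rwa [hb0norm, mul_one] at h
  rcases eq_or_lt_of_le hβ0 with h0 | hpos
  · linarith
  · have key : minner (secondMoment μ) (secondMoment μ) * minner (secondMoment μ) (secondMoment μ)
        ≤ lam 0 * minner (secondMoment μ) (secondMoment μ) := by
      nlinarith [hJ, hb, hX2, sub_nonneg.mpr hl01, mul_nonneg hl10 hβ0]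
    have := le_of_mul_le_mul_right key hpos
    linarith

lemma sep_bounds (μ : Measure (EuclideanSpace ℝ (Fin d))) [IsProbabilityMeasure μ]
    (K : ℝ) (hK : 0 ≤ K)
    (hall : ∀ μ₁ μ₂ : Measure (EuclideanSpace ℝ (Fin d)), IsProbabilityMeasure μ₁ →
      IsProbabilityMeasure μ₂ → μ = (2 : ℝ≥0∞)⁻¹ • μ₁ + (2 : ℝ≥0∞)⁻¹ • μ₂ →
      frobNorm (secondMoment μ₁ - secondMoment μ₂) ^ 2 ≤ 4 * K) :
    0 ≤ sep μ ∧ sep μ ^ 2 ≤ K := by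
  set S : Set ℝ := { r : ℝ | ∃ μ₁ μ₂ : Measure (EuclideanSpace ℝ (Fin d)),
    IsProbabilityMeasure μ₁ ∧ IsProbabilityMeasure μ₂ ∧
    μ = (2 : ℝ≥0∞)⁻¹ • μ₁ + (2 : ℝ≥0∞)⁻¹ • μ₂ ∧
    r = frobNorm (secondMoment μ₁ - secondMoment μ₂) } with hS
  have hsepS : sep μ = (1 / 2) * sSup S := rfl
  have hsq4 : Real.sqrt (4 * K) = 2 * Real.sqrt K := by
    rw [show (4 : ℝ) * K = 2 ^ 2 * K by norm_num, Real.sqrt_mul (by positivity) K,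
      Real.sqrt_sq (by norm_num : (0:ℝ) ≤ 2)]
  have hub : ∀ r ∈ S, r ≤ 2 * Real.sqrt K := by
    rintro r ⟨μ₁, μ₂, h1, h2, hdec, rfl⟩
    have h := hall μ₁ μ₂ h1 h2 hdec
    have h0 : 0 ≤ frobNorm (secondMoment μ₁ - secondMoment μ₂) := frobNorm_nonneg _
    calc frobNorm (secondMoment μ₁ - secondMoment μ₂)
        = Real.sqrt (frobNorm (secondMoment μ₁ - secondMoment μ₂) ^ 2) :=
          (Real.sqrt_sq h0).symm
      _ ≤ Real.sqrt (4 * K) := Real.sqrt_le_sqrt h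
      _ = 2 * Real.sqrt K := hsq4
  have hhalf : (2 : ℝ≥0∞)⁻¹ + 2⁻¹ = 1 := by
    rw [← two_mul, ENNReal.mul_inv_cancel (by norm_num) (by norm_num)]
  have h0mem : (0 : ℝ) ∈ S := by
    refine ⟨μ, μ, inferInstance, inferInstance, ?_, ?_⟩
    · rw [← add_smul, hhalf, one_smul]
    · rw [sub_self]
      simp [frobNorm]
  have hbdd : BddAbove S := ⟨2 * Real.sqrt K, hub⟩
  have hsup_le : sSup S ≤ 2 * Real.sqrt K := Real.sSup_le hub (by positivity)
  have hsup0 : 0 ≤ sSup S := le_csSup hbdd h0mem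
  constructor
  · rw [hsepS]; positivity
  · rw [hsepS]
    have h1 : (1 / 2) * sSup S ≤ Real.sqrt K := by linarith
    have h2 : 0 ≤ (1 / 2) * sSup S := by positivity
    calc ((1 / 2) * sSup S) ^ 2 ≤ Real.sqrt K ^ 2 := by
          exact pow_le_pow_left₀ h2 h1 2
      _ = K := Real.sq_sqrt hK

end Final

end SepAux

/-- upper bound on the second order separation parameter in terms of the
first and second largest eigenvalues of `T_μ`. -/
theorem sep_upper_bound
    (d : ℕ) (hd : 1 ≤ d) (μ : Measure (EuclideanSpace ℝ (Fin d)))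
    [IsProbabilityMeasure μ] (h4 : Integrable (fun x => ‖x‖ ^ 4) μ)
    (hμ : μ ≠ Measure.dirac 0)
    (lam : ℕ → ℝ) (hlam : IsEigenSeq μ lam) :
    (sep μ / frobNorm (secondMoment μ)) ^ 2 ≤
      4 * (lam 1 / lam 0 + (1 - frobNorm (secondMoment μ) ^ 2 / lam 0)) := by
  classical
  have hl10 : 0 ≤ lam 1 := SepAux.lam1_nonneg hd lam hlam
  have hl01 : lam 1 ≤ lam 0 := SepAux.lam1_le_lam0 lam hlam
  have hBsym : (secondMoment μ).IsSymm := SepAux.secondMoment_isSymm μ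
  have hfr : frobNorm (secondMoment μ) ^ 2 = minner (secondMoment μ) (secondMoment μ) :=
    SepAux.frobNorm_sq_eq_minner hBsym
  have hβ0 : 0 ≤ minner (secondMoment μ) (secondMoment μ) := SepAux.minner_self_nonneg hBsym
  have hβlam : minner (secondMoment μ) (secondMoment μ) ≤ lam 0 :=
    SepAux.beta_le_lam0 h4 hd lam hlam
  rcases eq_or_lt_of_le hβ0 with hβeq | hβpos
  · -- degenerate case: B = 0
    have hfB : frobNorm (secondMoment μ) = 0 := by
      have h2 : frobNorm (secondMoment μ) ^ 2 = 0 := by rw [hfr, ← hβeq]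
      exact (pow_eq_zero_iff (by norm_num : (2:ℕ) ≠ 0)).mp h2
    rw [hfB, div_zero]
    have hr : 0 ≤ lam 1 / lam 0 := div_nonneg hl10 (hl10.trans hl01)
    rw [show ((0 : ℝ) ^ 2) = 0 from by norm_num, zero_div]
    linarith [hr]
  · -- main case
    have hlam0pos : 0 < lam 0 := lt_of_lt_of_le hβpos hβlam
    -- the two bounds on sep
    have hb1 := SepAux.sep_bounds μ (minner (secondMoment μ) (secondMoment μ)) hβ0
      (fun μ₁ μ₂ h1 h2 hdec => by
        have hs : (secondMoment μ₁ - secondMoment μ₂).IsSymm :=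
          SepAux.isSymm_sub (SepAux.secondMoment_isSymm μ₁) (SepAux.secondMoment_isSymm μ₂)
        rw [SepAux.frobNorm_sq_eq_minner hs]
        exact SepAux.claimA h4 hdec)
    have hb2 := SepAux.sep_bounds μ
      (lam 0 + lam 1 - minner (secondMoment μ) (secondMoment μ)) (by linarith)
      (fun μ₁ μ₂ h1 h2 hdec => by
        have hs : (secondMoment μ₁ - secondMoment μ₂).IsSymm :=
          SepAux.isSymm_sub (SepAux.secondMoment_isSymm μ₁) (SepAux.secondMoment_isSymm μ₂)
        rw [SepAux.frobNorm_sq_eq_minner hs]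
        haveI := h1; haveI := h2
        exact SepAux.claimB hd h4 lam hlam hdec)
    obtain ⟨hsep0, hsepβ⟩ := hb1
    obtain ⟨-, hsepε⟩ := hb2
    have hLHS : (sep μ / frobNorm (secondMoment μ)) ^ 2
        = sep μ ^ 2 / minner (secondMoment μ) (secondMoment μ) := by
      rw [div_pow, hfr]
    have hRHS : 4 * (lam 1 / lam 0 + (1 - frobNorm (secondMoment μ) ^ 2 / lam 0))
        = 4 * (lam 0 + lam 1 - minner (secondMoment μ) (secondMoment μ)) / lam 0 := by
      rw [hfr]
      field_simp
      ring
    rw [hLHS, hRHS, div_le_div_iff₀ hβpos hlam0pos]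
    -- goal : sep μ ^ 2 * lam 0 ≤ 4 * (lam 0 + lam 1 - β) * β
    set β := minner (secondMoment μ) (secondMoment μ) with hβdef
    have hsq0 : 0 ≤ sep μ ^ 2 := sq_nonneg _
    by_cases hc : lam 0 ≤ 4 * (lam 0 + lam 1 - β)
    · nlinarith [mul_le_mul_of_nonneg_right hsepβ hlam0pos.le,
        mul_le_mul_of_nonneg_left hc hβ0]
    · push_neg at hc
      have hε0 : 0 ≤ lam 0 + lam 1 - β := by linarith
      have hβlb : 3 * lam 0 < 4 * β := by linarith
      nlinarith [mul_le_mul_of_nonneg_right hsepε hlam0pos.le,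
        mul_nonneg hε0 (by linarith : (0:ℝ) ≤ 4 * β - 3 * lam 0)]

end
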